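/- Let G be a profinite group and g ∈ G, and suppose the set of n-Engel values {[h, ₙg] : h ∈ G} has cardinality strictly smaller than 2^ℵ₀. Then there exist a positive integer k, an open normal subgroup N of G, and b ∈ G such that [[x·b, ₙg], g^k] = 1 for all x ∈ N. -/

import Mathlib

/-- The commutator `[a,b] = a⁻¹b⁻¹ab`. -/
def cmt {G : Type*} [Group G] (a b : G) : G := a⁻¹ * b⁻¹ * a * b

/-- The left-normed iterated commutator `[x, ₙg]` with `n` copies of `g`. -/
def engel {G : Type*} [Group G] (x g : G) : ℕ → G
  | 0 => x
  | n + 1 => cmt (engel x g n) g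


open Set

universe u

lemma exists_isOpen_constOn {X : Type u} [TopologicalSpace X] [CompactSpace X] [T2Space X]
    [Nonempty X] {f : X → X} (hf : Continuous f)
    (hcard : Cardinal.mk (Set.range f) < Cardinal.continuum) :
    ∃ U : Set X, IsOpen U ∧ U.Nonempty ∧ ∀ a ∈ U, ∀ b ∈ U, f a = f b := by
  by_contra hcon
  push_neg at hcon
  have step : ∀ t : {U : Set X // IsOpen U ∧ U.Nonempty},
      ∃ V : Bool → {U : Set X // IsOpen U ∧ U.Nonempty},
        (∀ i, closure (V i).1 ⊆ t.1) ∧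
        ∀ a ∈ closure (V false).1, ∀ b ∈ closure (V true).1, f a ≠ f b := by
    rintro ⟨U, hU, hUne⟩
    obtain ⟨a, ha, b, hb, hab⟩ := hcon U hU hUne
    obtain ⟨Va, Vb, hVa, hVb, haV, hbV, hdisj⟩ := t2_separation hab
    have h0 : U ∩ f ⁻¹' Va ∈ nhds a := (hU.inter (hVa.preimage hf)).mem_nhds ⟨ha, haV⟩
    have h1 : U ∩ f ⁻¹' Vb ∈ nhds b := (hU.inter (hVb.preimage hf)).mem_nhds ⟨hb, hbV⟩
    obtain ⟨C0, hC0mem, hC0closed, hC0sub⟩ := exists_mem_nhds_isClosed_subset h0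
    obtain ⟨C1, hC1mem, hC1closed, hC1sub⟩ := exists_mem_nhds_isClosed_subset h1
    refine ⟨fun i => if i then ⟨interior C1, isOpen_interior, ⟨b, mem_interior_iff_mem_nhds.2 hC1mem⟩⟩
        else ⟨interior C0, isOpen_interior, ⟨a, mem_interior_iff_mem_nhds.2 hC0mem⟩⟩, ?_, ?_⟩
    · intro i
      cases i
      · exact (closure_minimal interior_subset hC0closed).trans (hC0sub.trans inter_subset_left)
      · exact (closure_minimal interior_subset hC1closed).trans (hC1sub.trans inter_subset_left)
    · intro p hp q hq
      simp only [Bool.false_eq_true, if_false, if_true] at hp hq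
      have hpa : f p ∈ Va := (hC0sub ((closure_minimal interior_subset hC0closed) hp)).2
      have hqb : f q ∈ Vb := (hC1sub ((closure_minimal interior_subset hC1closed) hq)).2
      intro hfeq
      exact hdisj.ne_of_mem hpa hqb (by rw [hfeq])
  choose V hVsub hVdisj using step
  set t0 : {U : Set X // IsOpen U ∧ U.Nonempty} := ⟨univ, isOpen_univ, univ_nonempty⟩ with ht0
  let F : List Bool → {U : Set X // IsOpen U ∧ U.Nonempty} :=
    fun s => List.rec t0 (fun i _ ih => V ih i) s
  have hF : ∀ (i : Bool) (s : List Bool), F (i :: s) = V (F s) i := fun _ _ => rfl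
  let L : (ℕ → Bool) → ℕ → List Bool := fun x => Nat.rec [] (fun k ih => x k :: ih)
  have hL : ∀ x k, L x (k + 1) = x k :: L x k := fun _ _ => rfl
  have hLagree : ∀ (x y : ℕ → Bool) (k : ℕ), (∀ j < k, x j = y j) → L x k = L y k := by
    intro x y k
    induction k with
    | zero => intro _; rfl
    | succ k ih =>
      intro h
      rw [hL, hL, ih (fun j hj => h j (Nat.lt_succ_of_lt hj)), h k (Nat.lt_succ_self k)]
  let A : (ℕ → Bool) → ℕ → Set X := fun x k => closure (F (L x k)).1
  have hAanti : ∀ x k, A x (k + 1) ⊆ A x k := by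
    intro x k
    calc A x (k + 1) = closure (F (x k :: L x k)).1 := rfl
      _ ⊆ (F (L x k)).1 := by rw [hF]; exact hVsub (F (L x k)) (x k)
      _ ⊆ A x k := subset_closure
  have hAne : ∀ x k, (A x k).Nonempty := fun x k => (F (L x k)).2.2.closure
  have hAcl : ∀ x k, IsClosed (A x k) := fun _ _ => isClosed_closure
  have hpex : ∀ x : ℕ → Bool, ∃ p, ∀ k, p ∈ A x k := by
    intro x
    obtain ⟨p, hp⟩ := IsCompact.nonempty_iInter_of_sequence_nonempty_isCompact_isClosed
      (A x) (hAanti x) (hAne x) ((hAcl x 0).isCompact) (hAcl x)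
    exact ⟨p, fun k => mem_iInter.1 hp k⟩
  choose p hpmem using hpex
  -- injectivity of f ∘ p
  have hinj : Function.Injective (fun x : ℕ → Bool => f (p x)) := by
    intro x y hxy
    by_contra hne
    have hex : ∃ j, x j ≠ y j := by
      by_contra h
      push_neg at h
      exact hne (funext h)
    set k := Nat.find hex with hk
    have hkspec : x k ≠ y k := Nat.find_spec hex
    have hagree : ∀ j < k, x j = y j := fun j hj => by
      by_contra h; exact Nat.find_min hex hj h
    have hLeq : L x k = L y k := hLagree x y k hagree
    have hx1 : p x ∈ closure (F (x k :: L x k)).1 := hpmem x (k + 1)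
    have hy1 : p y ∈ closure (F (y k :: L x k)).1 := by
      have := hpmem y (k + 1)
      rwa [show A y (k+1) = closure (F (y k :: L y k)).1 from rfl, ← hLeq] at this
    rw [hF] at hx1 hy1
    cases hxk : x k with
    | false =>
      have hyk : y k = true := by
        cases hyk : y k
        · exact absurd (hxk.trans hyk.symm) hkspec
        · rfl
      rw [hxk] at hx1; rw [hyk] at hy1
      exact hVdisj (F (L x k)) _ hx1 _ hy1 hxy
    | true =>
      have hyk : y k = false := by
        cases hyk : y k
        · rfl
        · exact absurd (hxk.trans hyk.symm) hkspec
      rw [hxk] at hx1; rw [hyk] at hy1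
      exact hVdisj (F (L x k)) _ hy1 _ hx1 hxy.symm
  -- cardinality contradiction
  have hle : Cardinal.continuum ≤ Cardinal.mk (Set.range f) := by
    have hemb : Cardinal.lift.{u} (Cardinal.mk (ℕ → Bool)) ≤
        Cardinal.lift.{0} (Cardinal.mk (Set.range f)) := by
      rw [Cardinal.lift_mk_le']
      exact ⟨⟨fun x => ⟨f (p x), Set.mem_range_self _⟩,
        fun x y h => hinj (congrArg Subtype.val h)⟩⟩
    have h1 : Cardinal.mk (ℕ → Bool) = Cardinal.continuum := by
      rw [Cardinal.mk_arrow, Cardinal.mk_bool, Cardinal.mk_nat, Cardinal.lift_uzero,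
        Cardinal.lift_uzero, Cardinal.two_power_aleph0]
    rw [h1, Cardinal.lift_continuum, Cardinal.lift_uzero] at hemb
    exact hemb
  exact absurd hcard (not_lt.2 hle)

lemma continuous_engel {G : Type*} [Group G] [TopologicalSpace G] [IsTopologicalGroup G]
    (g : G) (n : ℕ) : Continuous (fun h => engel h g n) := by
  induction n with
  | zero => exact continuous_id
  | succ n ih =>
    show Continuous fun h => cmt (engel h g n) g
    simp only [cmt]
    exact ((ih.inv.mul continuous_const).mul ih).mul continuous_const

lemma engel_conj {G : Type*} [Group G] (h g : G) (n : ℕ) :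
    engel (g⁻¹ * h * g) g n = g⁻¹ * engel h g n * g := by
  induction n with
  | zero => rfl
  | succ n ih =>
    show cmt (engel (g⁻¹ * h * g) g n) g = g⁻¹ * cmt (engel h g n) g * g
    rw [ih, cmt, cmt]
    group

lemma engel_pow_conj {G : Type*} [Group G] (h g : G) (n m : ℕ) :
    engel ((g ^ m)⁻¹ * h * g ^ m) g n = (g ^ m)⁻¹ * engel h g n * g ^ m := by
  induction m with
  | zero => simp
  | succ m ih =>
    have e1 : (g ^ (m+1))⁻¹ * h * g ^ (m+1) = g⁻¹ * ((g ^ m)⁻¹ * h * g ^ m) * g := by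
      rw [pow_succ]; group
    rw [e1, engel_conj, ih, pow_succ]
    group

/-- If for `g` in a profinite group `G` the set of values `[h, ₙg]` has
cardinality strictly smaller than the continuum, then there are a positive
integer `k` and a coset `Nb` of an open normal subgroup `N` such that
`[[xb, ₙg], g^k] = 1` for all `x ∈ N`. -/
theorem stmt7 {G : Type*} [Group G] [TopologicalSpace G] [IsTopologicalGroup G]
    [CompactSpace G] [T2Space G] [TotallyDisconnectedSpace G]
    (g : G) (n : ℕ) (hn : 0 < n)
    (hcard : Cardinal.mk {y : G | ∃ h : G, y = engel h g n} < Cardinal.continuum) :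
    ∃ (k : ℕ) (N : Subgroup G) (b : G), 0 < k ∧ N.Normal ∧ IsOpen (N : Set G) ∧
      ∀ x ∈ N, cmt (engel (x * b) g n) (g ^ k) = 1 := by
  classical
  set f : G → G := fun h => engel h g n with hfdef
  have hfc : Continuous f := continuous_engel g n
  have hcard' : Cardinal.mk (Set.range f) < Cardinal.continuum := by
    have hset : {y : G | ∃ h : G, y = engel h g n} = Set.range f := by
      ext y
      simp only [Set.mem_setOf_eq, Set.mem_range, hfdef]
      exact exists_congr fun h => eq_comm
    rwa [hset] at hcard
  obtain ⟨U, hUopen, ⟨b, hbU⟩, hconst⟩ := exists_isOpen_constOn hfc hcard'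
  set y := f b with hy
  -- find an open normal subgroup with N * b ⊆ U
  have hWopen : IsOpen ((fun x : G => x * b) ⁻¹' U) := hUopen.preimage (continuous_mul_right b)
  have hW1 : (1 : G) ∈ (fun x : G => x * b) ⁻¹' U := by
    simp only [Set.mem_preimage, one_mul]; exact hbU
  obtain ⟨C, ⟨hC1, hCclopen⟩, hCsub⟩ :=
    (nhds_basis_clopen (1 : G)).mem_iff.1 (hWopen.mem_nhds hW1)
  obtain ⟨H, hHsub⟩ :=
    IsTopologicalGroup.exist_openNormalSubgroup_sub_clopen_nhds_of_one hCclopen hC1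
  set N : Subgroup G := H.toSubgroup with hNdef
  have hNnormal : N.Normal := H.isNormal'
  have hNopen : IsOpen (N : Set G) := H.toOpenSubgroup.isOpen
  have hNmem : ∀ x ∈ N, f (x * b) = y := by
    intro x hx
    exact hconst _ (hCsub (hHsub hx)) b hbU
  -- pigeonhole on the finite quotient
  have hfin : Finite (G ⧸ N) := Subgroup.quotient_finite_of_isOpen N hNopen
  obtain ⟨i0, j0, hne, hq⟩ := Finite.exists_ne_map_eq_of_infinite
    (fun m : ℕ => (QuotientGroup.mk ((g ^ m)⁻¹ * b * g ^ m) : G ⧸ N))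
  -- arrange i < j
  obtain ⟨i, j, hij, hqeq⟩ : ∃ i j : ℕ, i < j ∧
      (QuotientGroup.mk ((g ^ i)⁻¹ * b * g ^ i) : G ⧸ N) =
        QuotientGroup.mk ((g ^ j)⁻¹ * b * g ^ j) := by
    rcases hne.lt_or_gt with h | h
    · exact ⟨i0, j0, h, hq⟩
    · exact ⟨j0, i0, h, hq.symm⟩
  set k := j - i with hkdef
  have hk0 : 0 < k := Nat.sub_pos_of_lt hij
  have hjk : i + k = j := Nat.add_sub_cancel' hij.le
  -- the element moving one conjugate of b to the other
  have hw : ((g ^ i)⁻¹ * b * g ^ i)⁻¹ * ((g ^ j)⁻¹ * b * g ^ j) ∈ N :=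
    QuotientGroup.eq.mp hqeq
  set w := ((g ^ i)⁻¹ * b * g ^ i)⁻¹ * ((g ^ j)⁻¹ * b * g ^ j) with hwdef
  set x := b * (g ^ i * w * (g ^ i)⁻¹) * b⁻¹ with hxdef
  have hxN : x ∈ N := hNnormal.conj_mem _ (hNnormal.conj_mem _ hw (g ^ i)) b
  have hc : (g ^ j)⁻¹ * b * g ^ j = (g ^ i)⁻¹ * (x * b) * g ^ i := by
    rw [hxdef, hwdef]; group
  -- compute f of that element in two ways
  have way1 : f ((g ^ j)⁻¹ * b * g ^ j) = (g ^ j)⁻¹ * y * g ^ j := by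
    rw [hfdef]; exact engel_pow_conj b g n j
  have way2 : f ((g ^ j)⁻¹ * b * g ^ j) = (g ^ i)⁻¹ * y * g ^ i := by
    have hstep : f ((g ^ i)⁻¹ * (x * b) * g ^ i) = (g ^ i)⁻¹ * f (x * b) * g ^ i :=
      engel_pow_conj (x * b) g n i
    rw [hc, hstep, hNmem x hxN]
  have heq : (g ^ i)⁻¹ * y * g ^ i = (g ^ j)⁻¹ * y * g ^ j := way2.symm.trans way1
  have h1' : g ^ j = g ^ k * g ^ i := by rw [← pow_add, add_comm, hjk]
  have e2 : g ^ k * y * (g ^ k)⁻¹ = y := by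
    calc g ^ k * y * (g ^ k)⁻¹
        = (g ^ k * g ^ i) * ((g ^ i)⁻¹ * y * g ^ i) * (g ^ k * g ^ i)⁻¹ := by group
      _ = g ^ j * ((g ^ i)⁻¹ * y * g ^ i) * (g ^ j)⁻¹ := by rw [h1']
      _ = g ^ j * ((g ^ j)⁻¹ * y * g ^ j) * (g ^ j)⁻¹ := by rw [heq]
      _ = y := by group
  have hcomm : g ^ k * y = y * g ^ k := mul_inv_eq_iff_eq_mul.mp e2
  have h6 : (g ^ k)⁻¹ * y * g ^ k = y := by
    rw [mul_assoc, ← hcomm, inv_mul_cancel_left]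
  refine ⟨k, N, b, hk0, hNnormal, hNopen, ?_⟩
  intro x' hx'
  have hfx : engel (x' * b) g n = y := hNmem x' hx'
  rw [hfx, cmt]
  calc y⁻¹ * (g ^ k)⁻¹ * y * g ^ k = y⁻¹ * ((g ^ k)⁻¹ * y * g ^ k) := by group
    _ = y⁻¹ * y := by rw [h6]
    _ = 1 := inv_mul_cancel y
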